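/- Removing boxes of colors i_1, then i_2, ..., then i_N from the downward-facing charged partition γ_I corresponds bijectively to adding boxes of the same colors (in the same order) to the upward-facing charged partition τ, provided the interval I is sufficiently large relative to N; moreover for every N such an interval I exists. -/

import Mathlib

/-- A right-black Maya diagram: eventually white in the positive direction and
eventually black in the negative direction (an upward-facing charged partition). -/
structure RBMaya where
  beads : ℤ → Bool
  white_up : ∃ N : ℤ, ∀ k : ℤ, N ≤ k → beads k = false
  black_down : ∃ N : ℤ, ∀ k : ℤ, k ≤ N → beads k = true

/-- Invert the colors of τ outside the interval [a, b]; for a ≪ 0 ≪ b this is a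
left-black Maya diagram (a downward-facing charged partition). -/
def flipOutside (τ : RBMaya) (a b : ℤ) : ℤ → Bool :=
  fun k => if a ≤ k ∧ k ≤ b then τ.beads k else !(τ.beads k)

/-- `SwapPath g js h` : the bead configuration h is obtained from g by
successively performing the box moves at the slots listed in js, each move
exchanging a black bead at position j with a white bead at position j + 1
(removing a box labeled j from a downward-facing charged partition, or
equivalently adding a box labeled j to an upward-facing one). -/
inductive SwapPath : (ℤ → Bool) → List ℤ → (ℤ → Bool) → Prop
  | nil (g : ℤ → Bool) : SwapPath g [] g
  | cons (g : ℤ → Bool) (j : ℤ) (js : List ℤ) (h : ℤ → Bool) :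
      g j = true → g (j + 1) = false →
      SwapPath (Function.update (Function.update g j false) (j + 1) true) js h →
      SwapPath g (j :: js) h

/-- All swaps in a path starting from a configuration that is white below `a`
and black above `b` occur at slots `j` with `a ≤ j` and `j + 1 ≤ b`. -/
lemma confine_down : ∀ js : List ℤ, ∀ g h : ℤ → Bool, ∀ a b : ℤ,
    (∀ k, k < a → g k = false) → (∀ k, b < k → g k = true) →
    SwapPath g js h → ∀ j ∈ js, a ≤ j ∧ j + 1 ≤ b := by
  intro js
  induction js with
  | nil => intro g h a b _ _ _ j hj; simp at hj
  | cons j0 js ih =>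
    intro g h a b hlo hhi hp j hj
    cases hp with
    | cons _ _ _ _ hb hw hp' =>
      have haj : a ≤ j0 := by
        by_contra hc
        push_neg at hc
        rw [hlo j0 hc] at hb; exact Bool.false_ne_true hb
      have hjb : j0 + 1 ≤ b := by
        by_contra hc
        push_neg at hc
        rw [hhi (j0 + 1) hc] at hw; exact Bool.noConfusion hw
      rcases List.mem_cons.mp hj with rfl | hj'
      · exact ⟨haj, hjb⟩
      · refine ih _ h a b ?_ ?_ hp' j hj'
        · intro k hk
          have hk1 : k ≠ j0 + 1 := by omega
          have hk2 : k ≠ j0 := by omega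
          rw [Function.update_of_ne hk1, Function.update_of_ne hk2]
          exact hlo k hk
        · intro k hk
          have hk1 : k ≠ j0 + 1 := by omega
          have hk2 : k ≠ j0 := by omega
          rw [Function.update_of_ne hk1, Function.update_of_ne hk2]
          exact hhi k hk

/-- All swaps in a path of length `m` starting from a configuration that is
black below `A` and white above `B` occur at slots `j` with
`A - m ≤ j` and `j + 1 ≤ B + m`. -/
lemma confine_up : ∀ js : List ℤ, ∀ g h : ℤ → Bool, ∀ A B : ℤ,
    (∀ k, k ≤ A → g k = true) → (∀ k, B ≤ k → g k = false) →
    SwapPath g js h → ∀ j ∈ js, A - js.length ≤ j ∧ j + 1 ≤ B + js.length := by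
  intro js
  induction js with
  | nil => intro g h A B _ _ _ j hj; simp at hj
  | cons j0 js ih =>
    intro g h A B hlo hhi hp j hj
    cases hp with
    | cons _ _ _ _ hb hw hp' =>
      have haj : A ≤ j0 := by
        by_contra hc
        push_neg at hc
        rw [hlo (j0 + 1) (by omega)] at hw
        exact Bool.noConfusion hw
      have hjb : j0 < B := by
        by_contra hc
        push_neg at hc
        rw [hhi j0 hc] at hb; exact Bool.false_ne_true hb
      have hlen : ((j0 :: js).length : ℤ) = js.length + 1 := by
        simp
      rcases List.mem_cons.mp hj with rfl | hj'
      · constructor <;> [skip; skip] <;> (rw [hlen]; omega)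
      · have hrec := ih _ h (A - 1) (B + 1) ?_ ?_ hp' j hj'
        · rw [hlen]; omega
        · intro k hk
          have hk1 : k ≠ j0 + 1 := by omega
          have hk2 : k ≠ j0 := by omega
          rw [Function.update_of_ne hk1, Function.update_of_ne hk2]
          exact hlo k (by omega)
        · intro k hk
          have hk1 : k ≠ j0 + 1 := by omega
          have hk2 : k ≠ j0 := by omega
          rw [Function.update_of_ne hk1, Function.update_of_ne hk2]
          exact hhi k (by omega)

/-- Swap paths transfer between configurations agreeing on an interval
containing all the swap slots. -/
lemma transfer : ∀ js : List ℤ, ∀ g g' h : ℤ → Bool, ∀ lo hi : ℤ,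
    (∀ k, lo ≤ k → k ≤ hi → g k = g' k) →
    (∀ j ∈ js, lo ≤ j ∧ j + 1 ≤ hi) →
    SwapPath g js h → ∃ h', SwapPath g' js h' := by
  intro js
  induction js with
  | nil => intro g g' h lo hi _ _ _; exact ⟨g', SwapPath.nil g'⟩
  | cons j0 js ih =>
    intro g g' h lo hi hag hconf hp
    cases hp with
    | cons _ _ _ _ hb hw hp' =>
      obtain ⟨h1, h2⟩ := hconf j0 List.mem_cons_self
      have hb' : g' j0 = true := by rw [← hag j0 h1 (by omega)]; exact hb
      have hw' : g' (j0 + 1) = false := by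
        rw [← hag (j0 + 1) (by omega) h2]; exact hw
      have hag' : ∀ k, lo ≤ k → k ≤ hi →
          (Function.update (Function.update g j0 false) (j0 + 1) true) k =
          (Function.update (Function.update g' j0 false) (j0 + 1) true) k := by
        intro k hk1 hk2
        rcases eq_or_ne k (j0 + 1) with rfl | hne1
        · simp [Function.update_self]
        · rw [Function.update_of_ne hne1, Function.update_of_ne hne1]
          rcases eq_or_ne k j0 with rfl | hne2
          · simp [Function.update_self]
          · rw [Function.update_of_ne hne2, Function.update_of_ne hne2]
            exact hag k hk1 hk2
      obtain ⟨h', hp''⟩ := ih _ _ h lo hi hag'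
        (fun j hj => hconf j (List.mem_cons_of_mem _ hj)) hp'
      exact ⟨h', SwapPath.cons g' j0 js h' hb' hw' hp''⟩

/-- for every N there is an interval I₀ = [a₀, b₀] such that for all
intervals I = [a, b] ⊇ I₀, performing at most N box-removals (of any sequence of
slots, hence of any sequence of colors mod n) on the downward-facing charged
partition γ_I = flipOutside τ a b is possible exactly when the corresponding
sequence of box-additions (at the same slots, hence with the same colors) is
possible on the upward-facing charged partition τ; this gives a color-preserving
bijection between removal sequences of length ≤ N from γ_I and addition
sequences of length ≤ N to τ. -/
theorem swapPath_flipOutside_iff (n : ℕ) (hn : 2 ≤ n) (τ : RBMaya) (N : ℕ) :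
    ∃ a₀ b₀ : ℤ, ∀ a b : ℤ, a ≤ a₀ → b₀ ≤ b →
      ∀ js : List ℤ, js.length ≤ N →
        ((∃ g : ℤ → Bool, SwapPath (flipOutside τ a b) js g) ↔
          (∃ g : ℤ → Bool, SwapPath τ.beads js g)) := by
  obtain ⟨B₀, hB₀⟩ := τ.white_up
  obtain ⟨A₀, hA₀⟩ := τ.black_down
  refine ⟨A₀ - N - 1, B₀ + N + 1, ?_⟩
  intro a b ha hb js hlen
  have hag : ∀ k, a ≤ k → k ≤ b → flipOutside τ a b k = τ.beads k := by
    intro k h1 h2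
    simp [flipOutside, h1, h2]
  have hγlo : ∀ k, k < a → flipOutside τ a b k = false := by
    intro k hk
    have h1 : ¬(a ≤ k ∧ k ≤ b) := by omega
    simp [flipOutside, h1, hA₀ k (by omega)]
  have hγhi : ∀ k, b < k → flipOutside τ a b k = true := by
    intro k hk
    have h1 : ¬(a ≤ k ∧ k ≤ b) := by omega
    simp [flipOutside, h1, hB₀ k (by omega)]
  constructor
  · rintro ⟨g, hp⟩
    exact transfer js (flipOutside τ a b) τ.beads g a b hag
      (confine_down js (flipOutside τ a b) g a b hγlo hγhi hp) hp
  · rintro ⟨g, hp⟩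
    have hconf := confine_up js τ.beads g A₀ B₀ hA₀ hB₀ hp
    refine transfer js τ.beads (flipOutside τ a b) g a b
      (fun k h1 h2 => (hag k h1 h2).symm) (fun j hj => ?_) hp
    obtain ⟨h1, h2⟩ := hconf j hj
    have : (js.length : ℤ) ≤ N := by exact_mod_cast hlen
    omega
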